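/- For every H ∈ (0,1/2) and all 0 ≤ s < t: ∫_s^t K_H(t,r)² dr ≥ (c_H² / (2H)) · (t−s)^{2H}. -/
import Mathlib


open Real MeasureTheory

noncomputable section

/-- The Beta function `B(a,b) = ∫_0^1 r^{a−1}(1−r)^{b−1} dr`. -/
def betaFn (a b : ℝ) : ℝ :=
  ∫ r in (0:ℝ)..1, r ^ (a - 1) * (1 - r) ^ (b - 1)

/-- The normalizing constant `c_H = (2H/((1−2H)·B(1−2H, H+1/2)))^{1/2}`. -/
def cH (H : ℝ) : ℝ :=
  Real.sqrt (2 * H / ((1 - 2 * H) * betaFn (1 - 2 * H) (H + 1/2)))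

/-- The Volterra kernel
`K_H(t,s) = c_H ((t/s)^{H−1/2}(t−s)^{H−1/2} + (1/2−H) s^{1/2−H} ∫_s^t r^{H−3/2}(r−s)^{H−1/2} dr)`. -/
def KH (H t s : ℝ) : ℝ :=
  cH H * ((t / s) ^ (H - 1/2) * (t - s) ^ (H - 1/2) +
    (1/2 - H) * s ^ (1/2 - H) * ∫ r in s..t, r ^ (H - 3/2) * (r - s) ^ (H - 1/2))

/-- The kernel `K̃_H(t,s) = t^{H−1/2} (t−s)^{−1/2−H} s^{1/2−H}`. -/
def KtH (H t s : ℝ) : ℝ :=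
  t ^ (H - 1/2) * (t - s) ^ (-(1/2) - H) * s ^ (1/2 - H)

open Set intervalIntegral

lemma cH_nonneg (H : ℝ) : 0 ≤ cH H := by unfold cH; exact Real.sqrt_nonneg _

/-- `∫_a^b (r-u)^c dr` for `c > -1`. -/
lemma integral_rpow_sub (u a b c : ℝ) (hc : -1 < c) :
    ∫ r in a..b, (r - u) ^ c = ((b - u) ^ (c + 1) - (a - u) ^ (c + 1)) / (c + 1) := by
  have := intervalIntegral.integral_comp_sub_right (a := a) (b := b) (fun x : ℝ => x ^ c) u
  rw [this, integral_rpow (Or.inl hc)]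

lemma intervalIntegrable_rpow_sub (u a b c : ℝ) (hc : -1 < c) :
    IntervalIntegrable (fun r => (r - u) ^ c) volume a b := by
  have h := (intervalIntegral.intervalIntegrable_rpow' (a := a - u) (b := b - u) hc).comp_sub_right u
  simpa using h

lemma gInt {H : ℝ} (hH0 : 0 < H) (hH1 : H < 1/2) {u b : ℝ} (hu : 0 < u) (hub : u ≤ b) :
    IntervalIntegrable (fun r => r ^ (H - 3/2) * (r - u) ^ (H - 1/2)) volume u b := by
  have hmaj : IntervalIntegrable (fun r => u ^ (H - 3/2) * (r - u) ^ (H - 1/2)) volume u b :=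
    (intervalIntegrable_rpow_sub u u b _ (by linarith)).const_mul _
  refine hmaj.mono_fun ?_ ?_
  · exact ((measurable_id'.pow_const _).mul
      ((measurable_id'.sub measurable_const).pow_const _)).aestronglyMeasurable
  · rw [uIoc_of_le hub]
    refine ae_restrict_of_forall_mem measurableSet_Ioc fun r hr => ?_
    have hru : 0 < r := lt_trans hu hr.1
    have h1 : (0:ℝ) ≤ (r - u) ^ (H - 1/2) := rpow_nonneg (by linarith [hr.1]) _
    have h2 : r ^ (H - 3/2) ≤ u ^ (H - 3/2) :=
      rpow_le_rpow_of_nonpos hu hr.1.le (by linarith)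
    have h3 : (0:ℝ) ≤ r ^ (H - 3/2) := rpow_nonneg hru.le _
    simp only [norm_mul, Real.norm_eq_abs, abs_of_nonneg h1, abs_of_nonneg h3,
      abs_of_nonneg (rpow_nonneg hu.le (H - 3/2))]
    exact mul_le_mul_of_nonneg_right h2 h1

/-- Lower bound on the inner integral. -/
lemma I_lower {H : ℝ} (hH0 : 0 < H) (hH1 : H < 1/2) {u t : ℝ} (hu : 0 < u) (hut : u < t) :
    (t - u) ^ (H - 1/2) * ((t ^ (H - 1/2) - u ^ (H - 1/2)) / (H - 1/2))
      ≤ ∫ r in u..t, r ^ (H - 3/2) * (r - u) ^ (H - 1/2) := by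
  have ht : (0:ℝ) < t := lt_trans hu hut
  have hmono : (∫ r in u..t, r ^ (H - 3/2) * (t - u) ^ (H - 1/2))
      ≤ ∫ r in u..t, r ^ (H - 3/2) * (r - u) ^ (H - 1/2) := by
    rw [intervalIntegral.integral_of_le hut.le, intervalIntegral.integral_of_le hut.le]
    have hcont : IntervalIntegrable (fun r => r ^ (H - 3/2) * (t - u) ^ (H - 1/2)) volume u t := by
      refine (ContinuousOn.intervalIntegrable ?_)
      refine (ContinuousOn.rpow_const continuousOn_id fun x hx => Or.inl ?_).mul continuousOn_const
      rw [uIcc_of_le hut.le] at hx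
      exact ne_of_gt (lt_of_lt_of_le hu hx.1)
    refine setIntegral_mono_on (by
        rw [intervalIntegrable_iff, uIoc_of_le hut.le] at hcont; exact hcont)
      (by
        have h := gInt hH0 hH1 hu hut.le
        rw [intervalIntegrable_iff, uIoc_of_le hut.le] at h; exact h)
      measurableSet_Ioc fun r hr => ?_
    have hru : 0 < r := lt_trans hu hr.1
    refine mul_le_mul_of_nonneg_left ?_ (rpow_nonneg hru.le _)
    exact rpow_le_rpow_of_nonpos (by linarith [hr.1]) (by linarith [hr.2]) (by linarith)
  calc (t - u) ^ (H - 1/2) * ((t ^ (H - 1/2) - u ^ (H - 1/2)) / (H - 1/2))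
      = ∫ r in u..t, r ^ (H - 3/2) * (t - u) ^ (H - 1/2) := by
        rw [intervalIntegral.integral_mul_const, integral_rpow
          (Or.inr ⟨by norm_num; intro h; linarith, by
            rw [uIcc_of_le hut.le]; intro h0; exact absurd h0.1 (not_le.mpr hu)⟩)]
        have : H - 3/2 + 1 = H - 1/2 := by ring
        rw [this]; ring
    _ ≤ _ := hmono

/-- Pointwise lower bound for the kernel. -/
lemma KH_lower {H : ℝ} (hH0 : 0 < H) (hH1 : H < 1/2) {u t : ℝ} (hu : 0 < u) (hut : u < t) :
    cH H * (t - u) ^ (H - 1/2) ≤ KH H t u := by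
  rw [KH]
  refine mul_le_mul_of_nonneg_left ?_ (cH_nonneg H)
  have ht : (0:ℝ) < t := lt_trans hu hut
  set A := u ^ (H - 1/2) with hA
  set B := t ^ (H - 1/2) with hB
  set C := (t - u) ^ (H - 1/2) with hC
  have hApos : 0 < A := rpow_pos_of_pos hu _
  have hCnn : 0 ≤ C := rpow_nonneg (by linarith) _
  have hdiv : (t / u) ^ (H - 1/2) = B / A := Real.div_rpow ht.le hu.le _
  have huinv : u ^ (1/2 - H) = A⁻¹ := by
    rw [hA, ← Real.rpow_neg hu.le]; norm_num
  have hI := I_lower hH0 hH1 hu hut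
  have hhalf : (0:ℝ) < 1/2 - H := by linarith
  have hA0 : A ≠ 0 := ne_of_gt hApos
  have hp0 : H - 1/2 ≠ 0 := by intro h; linarith [hhalf]
  have hcoef : (0:ℝ) ≤ (1/2 - H) * A⁻¹ := by positivity
  have step : (1/2 - H) * A⁻¹ * (C * ((B - A) / (H - 1/2)))
      ≤ (1/2 - H) * A⁻¹ * ∫ r in u..t, r ^ (H - 3/2) * (r - u) ^ (H - 1/2) := by
    exact mul_le_mul_of_nonneg_left hI hcoef
  have key : B / A * C + (1/2 - H) * A⁻¹ * (C * ((B - A) / (H - 1/2))) = C := by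
    have e0 : (B - A) / (H - 1/2) = (A - B) / (1/2 - H) := by
      rw [div_eq_div_iff hp0 (ne_of_gt hhalf)]; ring
    have e3 : (1/2 - H) * (1/2 - H)⁻¹ = 1 := mul_inv_cancel₀ (ne_of_gt hhalf)
    have e4 : A * A⁻¹ = 1 := mul_inv_cancel₀ hA0
    rw [e0, div_eq_mul_inv, div_eq_mul_inv]
    linear_combination C * e4 + A⁻¹ * C * (A - B) * e3
  rw [hdiv, huinv]
  calc C = B / A * C + (1/2 - H) * A⁻¹ * (C * ((B - A) / (H - 1/2))) := key.symm
    _ ≤ B / A * C + (1/2 - H) * A⁻¹ * ∫ r in u..t, r ^ (H - 3/2) * (r - u) ^ (H - 1/2) := by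
        linarith [step]
    _ = _ := by ring

/-- Upper bound for a piece of the inner integral near the left endpoint. -/
lemma I_piece1 {H : ℝ} (hH0 : 0 < H) (hH1 : H < 1/2) {u b : ℝ} (hu : 0 < u) (hub : u ≤ b)
    (hb : b ≤ 2 * u) :
    (∫ r in u..b, r ^ (H - 3/2) * (r - u) ^ (H - 1/2)) ≤ u ^ (2*H - 1) / (H + 1/2) := by
  have hmono : (∫ r in u..b, r ^ (H - 3/2) * (r - u) ^ (H - 1/2))
      ≤ ∫ r in u..b, u ^ (H - 3/2) * (r - u) ^ (H - 1/2) := by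
    rw [intervalIntegral.integral_of_le hub, intervalIntegral.integral_of_le hub]
    have h1 := gInt hH0 hH1 hu hub
    rw [intervalIntegrable_iff, uIoc_of_le hub] at h1
    have h2 : IntervalIntegrable (fun r => u ^ (H - 3/2) * (r - u) ^ (H - 1/2)) volume u b :=
      (intervalIntegrable_rpow_sub u u b _ (by linarith)).const_mul _
    rw [intervalIntegrable_iff, uIoc_of_le hub] at h2
    refine setIntegral_mono_on h1 h2 measurableSet_Ioc fun r hr => ?_
    exact mul_le_mul_of_nonneg_right
      (rpow_le_rpow_of_nonpos hu hr.1.le (by linarith))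
      (rpow_nonneg (by linarith [hr.1]) _)
  have hval : (∫ r in u..b, u ^ (H - 3/2) * (r - u) ^ (H - 1/2))
      = u ^ (H - 3/2) * ((b - u) ^ (H + 1/2) / (H + 1/2)) := by
    rw [intervalIntegral.integral_const_mul,
      integral_rpow_sub u u b _ (by linarith : (-1:ℝ) < H - 1/2)]
    have h0 : u - u = 0 := by ring
    have he : H - 1/2 + 1 = H + 1/2 := by ring
    rw [h0, he, Real.zero_rpow (by intro h; linarith), sub_zero]
  have hle : (b - u) ^ (H + 1/2) ≤ u ^ (H + 1/2) :=
    Real.rpow_le_rpow (by linarith) (by linarith) (by linarith)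
  calc (∫ r in u..b, r ^ (H - 3/2) * (r - u) ^ (H - 1/2))
      ≤ u ^ (H - 3/2) * ((b - u) ^ (H + 1/2) / (H + 1/2)) := hmono.trans hval.le
    _ ≤ u ^ (H - 3/2) * (u ^ (H + 1/2) / (H + 1/2)) := by
        refine mul_le_mul_of_nonneg_left ?_ (rpow_nonneg hu.le _)
        exact div_le_div_of_nonneg_right hle (by linarith) |>.trans_eq rfl
    _ = u ^ (2*H - 1) / (H + 1/2) := by
        rw [mul_div_assoc', ← Real.rpow_add hu]
        norm_num
        ring_nf

/-- Upper bound for the inner integral: `I(u) ≤ C_H u^{2H-1}`. -/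
lemma I_upper {H : ℝ} (hH0 : 0 < H) (hH1 : H < 1/2) {u t : ℝ} (hu : 0 < u) (hut : u < t) :
    (∫ r in u..t, r ^ (H - 3/2) * (r - u) ^ (H - 1/2))
      ≤ (1 / (H + 1/2) + 1 / (1 - 2*H)) * u ^ (2*H - 1) := by
  have hupos : (0:ℝ) < u ^ (2*H - 1) := rpow_pos_of_pos hu _
  rcases le_or_gt t (2*u) with hcase | hcase
  · have h1 := I_piece1 hH0 hH1 hu hut.le hcase
    have hm : (0:ℝ) < 1 - 2*H := by linarith
    have h2 : (0:ℝ) ≤ 1 / (1 - 2*H) * u ^ (2*H-1) := by positivity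
    have e : u ^ (2*H - 1) / (H + 1/2) = 1 / (H + 1/2) * u ^ (2*H - 1) := by ring
    calc (∫ r in u..t, r ^ (H - 3/2) * (r - u) ^ (H - 1/2))
        ≤ u ^ (2*H - 1) / (H + 1/2) := h1
      _ ≤ (1 / (H + 1/2) + 1 / (1 - 2*H)) * u ^ (2*H - 1) := by
          rw [e, add_mul]; linarith
  · have h2u : u < 2*u := by linarith
    have hsplit : (∫ r in u..(2*u), r ^ (H - 3/2) * (r - u) ^ (H - 1/2))
        + (∫ r in (2*u)..t, r ^ (H - 3/2) * (r - u) ^ (H - 1/2))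
        = ∫ r in u..t, r ^ (H - 3/2) * (r - u) ^ (H - 1/2) := by
      refine intervalIntegral.integral_add_adjacent_intervals ?_ ?_
      · exact (gInt hH0 hH1 hu hut.le).mono_set' (by
          rw [uIoc_of_le h2u.le, uIoc_of_le hut.le]
          exact Ioc_subset_Ioc le_rfl (by linarith))
      · exact (gInt hH0 hH1 hu hut.le).mono_set' (by
          rw [uIoc_of_le hcase.le, uIoc_of_le hut.le]
          exact Ioc_subset_Ioc h2u.le le_rfl)
    have hp1 := I_piece1 hH0 hH1 hu h2u.le le_rfl
    have hp2 : (∫ r in (2*u)..t, r ^ (H - 3/2) * (r - u) ^ (H - 1/2))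
        ≤ u ^ (2*H - 1) / (1 - 2*H) := by
      have hmono : (∫ r in (2*u)..t, r ^ (H - 3/2) * (r - u) ^ (H - 1/2))
          ≤ ∫ r in (2*u)..t, (2:ℝ) ^ (1/2 - H) * r ^ (2*H - 2) := by
        rw [intervalIntegral.integral_of_le hcase.le, intervalIntegral.integral_of_le hcase.le]
        have h1 : IntervalIntegrable (fun r => r ^ (H - 3/2) * (r - u) ^ (H - 1/2))
            volume (2*u) t :=
          (gInt hH0 hH1 hu hut.le).mono_set' (by
            rw [uIoc_of_le hcase.le, uIoc_of_le hut.le]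
            exact Ioc_subset_Ioc h2u.le le_rfl)
        rw [intervalIntegrable_iff, uIoc_of_le hcase.le] at h1
        have h2 : IntervalIntegrable (fun r => (2:ℝ) ^ (1/2 - H) * r ^ (2*H - 2))
            volume (2*u) t := by
          refine IntervalIntegrable.const_mul ?_ _
          refine ContinuousOn.intervalIntegrable ?_
          refine ContinuousOn.rpow_const continuousOn_id fun x hx => Or.inl ?_
          rw [uIcc_of_le hcase.le] at hx
          have : (0:ℝ) < 2*u := by linarith
          exact ne_of_gt (lt_of_lt_of_le this hx.1)
        rw [intervalIntegrable_iff, uIoc_of_le hcase.le] at h2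
        refine setIntegral_mono_on h1 h2 measurableSet_Ioc fun r hr => ?_
        have hr0 : 0 < r := by nlinarith [hr.1]
        have hr2 : r / 2 ≤ r - u := by nlinarith [hr.1]
        have hb1 : (r - u) ^ (H - 1/2) ≤ (r/2) ^ (H - 1/2) :=
          rpow_le_rpow_of_nonpos (by positivity) hr2 (by linarith)
        have hb2 : (r/2) ^ (H - 1/2) = r ^ (H - 1/2) * ((2:ℝ) ^ (H - 1/2))⁻¹ := by
          rw [Real.div_rpow hr0.le (by norm_num)]
          rw [div_eq_mul_inv]
        have hb3 : ((2:ℝ) ^ (H - 1/2))⁻¹ = (2:ℝ) ^ (1/2 - H) := by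
          rw [← Real.rpow_neg (by norm_num)]
          norm_num
        calc r ^ (H - 3/2) * (r - u) ^ (H - 1/2)
            ≤ r ^ (H - 3/2) * (r/2) ^ (H - 1/2) :=
              mul_le_mul_of_nonneg_left hb1 (rpow_nonneg hr0.le _)
          _ = (2:ℝ) ^ (1/2 - H) * (r ^ (H - 3/2) * r ^ (H - 1/2)) := by rw [hb2, hb3]; ring
          _ = (2:ℝ) ^ (1/2 - H) * r ^ (2*H - 2) := by
              rw [← Real.rpow_add hr0]; congr 1; ring
      have hval : (∫ r in (2*u)..t, (2:ℝ) ^ (1/2 - H) * r ^ (2*H - 2))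
          = (2:ℝ) ^ (1/2 - H) * ((t ^ (2*H - 1) - (2*u) ^ (2*H - 1)) / (2*H - 1)) := by
        rw [intervalIntegral.integral_const_mul, integral_rpow (Or.inr ⟨by intro h; linarith,
          by rw [uIcc_of_le hcase.le]; intro h0; nlinarith [h0.1]⟩)]
        have he : 2*H - 2 + 1 = 2*H - 1 := by ring
        rw [he]
      have hineq : (2:ℝ) ^ (1/2 - H) * ((t ^ (2*H - 1) - (2*u) ^ (2*H - 1)) / (2*H - 1))
          ≤ u ^ (2*H - 1) / (1 - 2*H) := by
        have ht0 : (0:ℝ) < t := by linarith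
        have htp : (0:ℝ) < t ^ (2*H - 1) := rpow_pos_of_pos ht0 _
        have hm : (0:ℝ) < 1 - 2*H := by linarith
        have h2p : (0:ℝ) < (2:ℝ) ^ (1/2 - H) := rpow_pos_of_pos (by norm_num) _
        have e1 : (t ^ (2*H-1) - (2*u) ^ (2*H-1)) / (2*H-1)
            = ((2*u) ^ (2*H-1) - t ^ (2*H-1)) / (1 - 2*H) := by
          rw [div_eq_div_iff (by intro h; linarith : (2*H-1:ℝ) ≠ 0) (ne_of_gt hm)]; ring
        rw [e1, mul_div_assoc']
        have key : (2:ℝ)^(1/2-H) * ((2*u)^(2*H-1) - t^(2*H-1)) ≤ u^(2*H-1) := by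
          have k1 : (2:ℝ)^(1/2-H) * ((2*u)^(2*H-1) - t^(2*H-1))
              ≤ (2:ℝ)^(1/2-H) * (2*u)^(2*H-1) :=
            mul_le_mul_of_nonneg_left (by linarith) h2p.le
          have e2 : (2*u:ℝ)^(2*H-1) = (2:ℝ)^(2*H-1) * u^(2*H-1) :=
            Real.mul_rpow (by norm_num) hu.le
          have e3 : (2:ℝ)^(1/2-H) * (2:ℝ)^(2*H-1) = (2:ℝ)^(H-1/2) := by
            rw [← Real.rpow_add (by norm_num : (0:ℝ) < 2)]; congr 1; ring
          have e4 : (2:ℝ)^(H-1/2) ≤ 1 :=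
            Real.rpow_le_one_of_one_le_of_nonpos (by norm_num) (by linarith)
          calc (2:ℝ)^(1/2-H) * ((2*u)^(2*H-1) - t^(2*H-1))
              ≤ (2:ℝ)^(1/2-H) * (2*u)^(2*H-1) := k1
            _ = (2:ℝ)^(H-1/2) * u^(2*H-1) := by rw [e2, ← mul_assoc, e3]
            _ ≤ 1 * u^(2*H-1) := mul_le_mul_of_nonneg_right e4 hupos.le
            _ = u^(2*H-1) := one_mul _
        exact div_le_div_of_nonneg_right key hm.le
      exact hmono.trans (hval.le.trans hineq)
    calc (∫ r in u..t, r ^ (H - 3/2) * (r - u) ^ (H - 1/2))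
        = _ + _ := hsplit.symm
      _ ≤ u ^ (2*H - 1) / (H + 1/2) + u ^ (2*H - 1) / (1 - 2*H) := add_le_add hp1 hp2
      _ = (1 / (H + 1/2) + 1 / (1 - 2*H)) * u ^ (2*H - 1) := by ring

/-- Pointwise upper bound for the kernel. -/
lemma KH_upper {H : ℝ} (hH0 : 0 < H) (hH1 : H < 1/2) {u t : ℝ} (hu : 0 < u) (hut : u < t) :
    KH H t u ≤ cH H * ((t - u) ^ (H - 1/2)
      + (1/2 - H) * (1 / (H + 1/2) + 1 / (1 - 2*H)) * u ^ (H - 1/2)) := by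
  rw [KH]
  refine mul_le_mul_of_nonneg_left ?_ (cH_nonneg H)
  have ht : (0:ℝ) < t := lt_trans hu hut
  have hX : (t / u) ^ (H - 1/2) * (t - u) ^ (H - 1/2) ≤ (t - u) ^ (H - 1/2) := by
    have h1 : (t / u) ^ (H - 1/2) ≤ 1 :=
      Real.rpow_le_one_of_one_le_of_nonpos ((one_le_div hu).2 hut.le) (by linarith)
    nlinarith [rpow_nonneg (by linarith : (0:ℝ) ≤ t - u) (H - 1/2),
      rpow_nonneg (div_nonneg ht.le hu.le) (H - 1/2)]
  have hY : (1/2 - H) * u ^ (1/2 - H) * (∫ r in u..t, r ^ (H - 3/2) * (r - u) ^ (H - 1/2))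
      ≤ (1/2 - H) * (1 / (H + 1/2) + 1 / (1 - 2*H)) * u ^ (H - 1/2) := by
    have hcoef : (0:ℝ) ≤ (1/2 - H) * u ^ (1/2 - H) := by
      have : (0:ℝ) < 1/2 - H := by linarith
      positivity
    have h1 := I_upper hH0 hH1 hu hut
    have h2 : (1/2 - H) * u ^ (1/2 - H)
          * ((1 / (H + 1/2) + 1 / (1 - 2*H)) * u ^ (2*H - 1))
        = (1/2 - H) * (1 / (H + 1/2) + 1 / (1 - 2*H)) * u ^ (H - 1/2) := by
      have e : u ^ (1/2 - H) * u ^ (2*H - 1) = u ^ (H - 1/2) := by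
        rw [← Real.rpow_add hu]; congr 1; ring
      calc (1/2 - H) * u ^ (1/2 - H) * ((1 / (H + 1/2) + 1 / (1 - 2*H)) * u ^ (2*H - 1))
          = (1/2 - H) * (1 / (H + 1/2) + 1 / (1 - 2*H))
            * (u ^ (1/2 - H) * u ^ (2*H - 1)) := by ring
        _ = _ := by rw [e]
    calc (1/2 - H) * u ^ (1/2 - H) * (∫ r in u..t, r ^ (H - 3/2) * (r - u) ^ (H - 1/2))
        ≤ (1/2 - H) * u ^ (1/2 - H)
          * ((1 / (H + 1/2) + 1 / (1 - 2*H)) * u ^ (2*H - 1)) :=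
          mul_le_mul_of_nonneg_left h1 hcoef
      _ = _ := h2
  linarith [hX, hY]

/-- Measurability of the inner-integral function. -/
lemma J_stronglyMeasurable (H t : ℝ) :
    StronglyMeasurable (fun u : ℝ =>
      ∫ r, (Set.Ioc u t).indicator (fun r => r ^ (H - 3/2) * (r - u) ^ (H - 1/2)) r) := by
  have hS : MeasurableSet {x : ℝ × ℝ | x.1 < x.2 ∧ x.2 ≤ t} := by
    refine (measurableSet_lt measurable_fst measurable_snd).inter ?_
    exact measurable_snd measurableSet_Iic
  have hF : Measurable (fun x : ℝ × ℝ =>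
      ({x : ℝ × ℝ | x.1 < x.2 ∧ x.2 ≤ t}).indicator
        (fun x => x.2 ^ (H - 3/2) * (x.2 - x.1) ^ (H - 1/2)) x) := by
    refine Measurable.indicator ?_ hS
    exact (measurable_snd.pow_const _).mul ((measurable_snd.sub measurable_fst).pow_const _)
  have hSM := hF.stronglyMeasurable.integral_prod_right' (ν := volume)
  have heq : (fun u : ℝ =>
      ∫ r, (Set.Ioc u t).indicator (fun r => r ^ (H - 3/2) * (r - u) ^ (H - 1/2)) r)
      = fun u => ∫ r, ({x : ℝ × ℝ | x.1 < x.2 ∧ x.2 ≤ t}).indicator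
          (fun x => x.2 ^ (H - 3/2) * (x.2 - x.1) ^ (H - 1/2)) (u, r) := by
    funext u
    rfl
  rw [heq]
  exact hSM

/-- The kernel squared is integrable. -/
lemma KH_sq_integrableOn {H s t : ℝ} (hH0 : 0 < H) (hH1 : H < 1/2)
    (hs : 0 ≤ s) (hst : s < t) :
    IntegrableOn (fun u => KH H t u ^ 2) (Set.Ioc s t) volume := by
  have hc : 0 ≤ cH H := cH_nonneg H
  set DD := (1/2 - H) * (1 / (H + 1/2) + 1 / (1 - 2*H)) with hDDdef
  have hm : (0:ℝ) < 1 - 2*H := by linarith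
  have hDD0 : 0 ≤ DD := by
    have h1 : (0:ℝ) < 1/2 - H := by linarith
    have h2 : (0:ℝ) < 1 / (H + 1/2) + 1 / (1 - 2*H) := by positivity
    positivity
  have hmaj : IntegrableOn
      (fun u => 2 * cH H ^ 2 * (t - u) ^ (2*H - 1) + 2 * cH H ^ 2 * DD ^ 2 * u ^ (2*H - 1))
      (Set.Ioc s t) volume := by
    have h1 : IntervalIntegrable (fun u => (t - u) ^ (2*H - 1)) volume s t := by
      have := ((intervalIntegral.intervalIntegrable_rpow'
        (a := t - t) (b := t - s) (by linarith : (-1:ℝ) < 2*H - 1)).comp_sub_left t).symm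
      simpa using this
    have h2 : IntervalIntegrable (fun u : ℝ => u ^ (2*H - 1)) volume s t :=
      intervalIntegral.intervalIntegrable_rpow' (by linarith)
    have h3 := (h1.const_mul (2 * cH H ^ 2)).add (h2.const_mul (2 * cH H ^ 2 * DD ^ 2))
    rw [intervalIntegrable_iff, uIoc_of_le hst.le] at h3
    exact h3
  refine hmaj.mono' ?_ ?_
  · -- measurability
    have hG : Measurable (fun u : ℝ => (cH H * ((t / u) ^ (H - 1/2) * (t - u) ^ (H - 1/2) +
        (1/2 - H) * u ^ (1/2 - H) *
          ∫ r, (Set.Ioc u t).indicator (fun r => r ^ (H - 3/2) * (r - u) ^ (H - 1/2)) r)) ^ 2) := by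
      refine Measurable.pow_const ?_ 2
      refine Measurable.const_mul ?_ _
      refine Measurable.add ?_ ?_
      · exact ((measurable_const.div measurable_id').pow_const _).mul
          ((measurable_const.sub measurable_id').pow_const _)
      · exact (measurable_const.mul (measurable_id'.pow_const _)).mul
          (J_stronglyMeasurable H t).measurable
    refine (hG.aestronglyMeasurable.restrict).congr ?_
    refine (ae_restrict_iff' measurableSet_Ioc).2 (ae_of_all _ fun u hu => ?_)
    have hut : u ≤ t := hu.2
    have hJ : (∫ r in u..t, r ^ (H - 3/2) * (r - u) ^ (H - 1/2))
        = ∫ r, (Set.Ioc u t).indicator (fun r => r ^ (H - 3/2) * (r - u) ^ (H - 1/2)) r := by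
      rw [intervalIntegral.integral_of_le hut,
        MeasureTheory.integral_indicator measurableSet_Ioc]
    simp only [KH, hJ]
  · -- a.e. bound
    refine (ae_restrict_iff' measurableSet_Ioc).2 (ae_of_all _ fun u hu => ?_)
    have hu0 : 0 < u := lt_of_le_of_lt hs hu.1
    rcases eq_or_lt_of_le hu.2 with heq | hlt
    · -- u = t
      have hKH : KH H t u = 0 := by
        rw [heq, KH]
        rw [intervalIntegral.integral_same]
        have : t - t = 0 := by ring
        rw [this, Real.zero_rpow (by intro h; linarith)]
        ring
      rw [hKH]
      have h1 : (0:ℝ) ≤ (t - u) ^ (2*H - 1) := rpow_nonneg (by linarith [hu.2]) _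
      have h2 : (0:ℝ) ≤ u ^ (2*H - 1) := rpow_nonneg hu0.le _
      simp only [norm_zero, ne_eq, OfNat.ofNat_ne_zero, not_false_eq_true, zero_pow]
      positivity
    · -- u < t
      have hlow := KH_lower hH0 hH1 hu0 hlt
      have hup := KH_upper hH0 hH1 hu0 hlt
      have hXnn : (0:ℝ) ≤ (t - u) ^ (H - 1/2) := rpow_nonneg (by linarith) _
      have hYnn : (0:ℝ) ≤ u ^ (H - 1/2) := rpow_nonneg hu0.le _
      have h0 : 0 ≤ KH H t u := le_trans (by positivity) hlow
      have hsq : KH H t u ^ 2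
          ≤ (cH H * ((t - u) ^ (H - 1/2) + DD * u ^ (H - 1/2))) ^ 2 :=
        pow_le_pow_left₀ h0 hup 2
      have ea : ((t - u) ^ (H - 1/2)) ^ 2 = (t - u) ^ (2*H - 1) := by
        rw [sq, ← Real.rpow_add (by linarith : (0:ℝ) < t - u)]; congr 1; ring
      have eb : (u ^ (H - 1/2)) ^ 2 = u ^ (2*H - 1) := by
        rw [sq, ← Real.rpow_add hu0]; congr 1; ring
      have hnorm : ‖KH H t u ^ 2‖ = KH H t u ^ 2 := by
        rw [Real.norm_eq_abs, abs_of_nonneg (by positivity)]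
      rw [hnorm]
      refine hsq.trans ?_
      have expand : (cH H * ((t - u) ^ (H - 1/2) + DD * u ^ (H - 1/2))) ^ 2
          ≤ 2 * cH H ^ 2 * ((t - u) ^ (H - 1/2)) ^ 2
            + 2 * cH H ^ 2 * DD ^ 2 * (u ^ (H - 1/2)) ^ 2 := by
        nlinarith [sq_nonneg ((t - u) ^ (H - 1/2) - DD * u ^ (H - 1/2)), sq_nonneg (cH H)]
      calc (cH H * ((t - u) ^ (H - 1/2) + DD * u ^ (H - 1/2))) ^ 2
          ≤ 2 * cH H ^ 2 * ((t - u) ^ (H - 1/2)) ^ 2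
            + 2 * cH H ^ 2 * DD ^ 2 * (u ^ (H - 1/2)) ^ 2 := expand
        _ = 2 * cH H ^ 2 * (t - u) ^ (2*H - 1) + 2 * cH H ^ 2 * DD ^ 2 * u ^ (2*H - 1) := by
            rw [ea, eb]

/-- For `H ∈ (0,1/2)` and `0 ≤ s < t`: `∫_s^t K_H(t,r)² dr ≥ (c_H²/(2H))·(t−s)^{2H}`. -/
theorem KH_square_integral_lower_bound
    (H : ℝ) (hH0 : 0 < H) (hH1 : H < 1/2) (s t : ℝ) (hs : 0 ≤ s) (hst : s < t) :
    cH H ^ 2 / (2 * H) * (t - s) ^ (2 * H) ≤ ∫ r in s..t, (KH H t r) ^ 2 := by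
  have hc : 0 ≤ cH H := cH_nonneg H
  have hlowInt : IntervalIntegrable (fun r => cH H ^ 2 * (t - r) ^ (2*H - 1)) volume s t := by
    have := ((intervalIntegral.intervalIntegrable_rpow'
      (a := t - t) (b := t - s) (by linarith : (-1:ℝ) < 2*H - 1)).comp_sub_left t).symm
    exact (by simpa using this : IntervalIntegrable (fun r => (t - r) ^ (2*H-1)) volume s t
      ).const_mul _
  have hmono : (∫ r in s..t, cH H ^ 2 * (t - r) ^ (2*H - 1)) ≤ ∫ r in s..t, (KH H t r) ^ 2 := by
    rw [intervalIntegral.integral_of_le hst.le, intervalIntegral.integral_of_le hst.le]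
    have h1 : IntegrableOn (fun r => cH H ^ 2 * (t - r) ^ (2*H - 1)) (Set.Ioc s t) volume := by
      rw [intervalIntegrable_iff, uIoc_of_le hst.le] at hlowInt; exact hlowInt
    refine setIntegral_mono_on h1 (KH_sq_integrableOn hH0 hH1 hs hst)
      measurableSet_Ioc fun r hr => ?_
    have hr0 : 0 < r := lt_of_le_of_lt hs hr.1
    rcases eq_or_lt_of_le hr.2 with heq | hlt
    · rw [heq]
      have : t - t = 0 := by ring
      rw [this, Real.zero_rpow (by intro h; linarith)]
      simpa using sq_nonneg (KH H t t)
    · have hlow := KH_lower hH0 hH1 hr0 hlt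
      have h0 : (0:ℝ) ≤ cH H * (t - r) ^ (H - 1/2) := by
        have : (0:ℝ) ≤ (t - r) ^ (H - 1/2) := rpow_nonneg (by linarith) _
        positivity
      have hsq := pow_le_pow_left₀ h0 hlow 2
      have ea : (cH H * (t - r) ^ (H - 1/2)) ^ 2 = cH H ^ 2 * (t - r) ^ (2*H - 1) := by
        rw [mul_pow, sq ((t - r) ^ (H - 1/2)),
          ← Real.rpow_add (by linarith : (0:ℝ) < t - r)]
        congr 2
        ring
      rw [← ea]
      exact hsq
  have hval : (∫ r in s..t, cH H ^ 2 * (t - r) ^ (2*H - 1))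
      = cH H ^ 2 / (2 * H) * (t - s) ^ (2 * H) := by
    rw [intervalIntegral.integral_const_mul]
    have hcomp := intervalIntegral.integral_comp_sub_left (a := s) (b := t)
      (fun x : ℝ => x ^ (2*H - 1)) t
    rw [hcomp]
    have h0 : t - t = 0 := by ring
    rw [h0, integral_rpow (Or.inl (by linarith : (-1:ℝ) < 2*H - 1))]
    have he : 2*H - 1 + 1 = 2*H := by ring
    rw [he, Real.zero_rpow (by intro h; linarith)]
    ring
  linarith [hmono, hval.ge]

end
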